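/- Let Λ be an (n−1)-Auslander algebra with global dimension n and S a projective simple Λ-module. Then Hom_Λ(I^0(Λ), S) ≠ 0 if and only if S is injective; and Hom_Λ(I^0(Λ), S) = 0 if and only if id_Λ S = n. -/

import Mathlib

open CategoryTheory Limits

noncomputable section

namespace Paper

variable (Λ : Type) [Ring Λ]

/-- The `i`-th Ext group (as a `ℤ`-module) between two `Λ`-modules. -/
abbrev ext (M N : ModuleCat.{0} Λ) (i : ℕ) : ModuleCat ℤ :=
  ((Ext ℤ (ModuleCat.{0} Λ) i).obj (Opposite.op M)).obj N

variable {Λ}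

/-- `Ext^i(M,N) = 0`. -/
def extZero (M N : ModuleCat.{0} Λ) (i : ℕ) : Prop :=
  Subsingleton (ext Λ M N i)

variable (Λ)

/-- projective dimension at most `n` (via Ext-vanishing beyond `n`). -/
def pdLE (M : ModuleCat.{0} Λ) (n : ℕ) : Prop :=
  ∀ N : ModuleCat.{0} Λ, ∀ i, n < i → extZero M N i

/-- projective dimension exactly `n`. -/
def pdEq (M : ModuleCat.{0} Λ) (n : ℕ) : Prop :=
  pdLE Λ M n ∧ ∀ m : ℕ, pdLE Λ M m → n ≤ m

/-- injective dimension at most `n`. -/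
def idLE (M : ModuleCat.{0} Λ) (n : ℕ) : Prop :=
  ∀ N : ModuleCat.{0} Λ, ∀ i, n < i → extZero N M i

/-- injective dimension exactly `n`. -/
def idEq (M : ModuleCat.{0} Λ) (n : ℕ) : Prop :=
  idLE Λ M n ∧ ∀ m : ℕ, idLE Λ M m → n ≤ m

/-- global dimension at most `n`. -/
def glDimLE (n : ℕ) : Prop := ∀ M : ModuleCat.{0} Λ, pdLE Λ M n

/-- global dimension exactly `n`. -/
def glDimEq (n : ℕ) : Prop := glDimLE Λ n ∧ ∀ m : ℕ, glDimLE Λ m → n ≤ m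

/-- An essential submodule: it meets every nonzero submodule nontrivially. -/
def Essential {M : Type} [AddCommGroup M] [Module Λ M] (K : Submodule Λ M) : Prop :=
  ∀ L : Submodule Λ M, L ≠ ⊥ → K ⊓ L ≠ ⊥

/-- A minimal injective resolution `0 → M → I⁰ → I¹ → ⋯`. -/
structure MinInjRes (M : ModuleCat.{0} Λ) where
  I : ℕ → ModuleCat.{0} Λ
  ι : M ⟶ I 0
  d : ∀ i : ℕ, I i ⟶ I (i + 1)
  injective : ∀ i, Injective (I i)
  mono_ι : Function.Injective ι
  exact_ι : LinearMap.range ι.hom = LinearMap.ker (d 0).hom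
  exact_d : ∀ i, LinearMap.range (d i).hom = LinearMap.ker (d (i + 1)).hom
  ess_ι : Essential Λ (LinearMap.range ι.hom)
  ess_d : ∀ i, Essential Λ (LinearMap.range (d i).hom)

/-- A (superfluous-kernel, i.e. minimal) projective resolution `⋯ → P₁ → P₀ → M → 0`. -/
structure MinProjRes (M : ModuleCat.{0} Λ) where
  P : ℕ → ModuleCat.{0} Λ
  π : P 0 ⟶ M
  d : ∀ i : ℕ, P (i + 1) ⟶ P i
  projective : ∀ i, Projective (P i)
  epi_π : Function.Surjective π
  exact_π : LinearMap.range (d 0).hom = LinearMap.ker π.hom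
  exact_d : ∀ i, LinearMap.range (d (i + 1)).hom = LinearMap.ker (d i).hom
  small_π : ∀ K : Submodule Λ (P 0), K ⊔ LinearMap.ker π.hom = ⊤ → K = ⊤
  small_d : ∀ i, ∀ K : Submodule Λ (P (i + 1)), K ⊔ LinearMap.ker (d i).hom = ⊤ → K = ⊤

/-- Flat dimension at most `n` (for Artin algebras flat = projective on these terms):
a resolution by projective (= flat) modules vanishing beyond degree `n`. -/
def fdLE (M : ModuleCat.{0} Λ) (n : ℕ) : Prop :=
  ∃ (F : ℕ → ModuleCat.{0} Λ) (π : F 0 ⟶ M) (d : ∀ i : ℕ, F (i + 1) ⟶ F i),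
    (∀ i, Projective (F i)) ∧ Function.Surjective π ∧
    LinearMap.range (d 0).hom = LinearMap.ker π.hom ∧
    (∀ i, LinearMap.range (d (i + 1)).hom = LinearMap.ker (d i).hom) ∧
    (∀ i, n < i → Subsingleton (F i))

/-- A maximal `n`-orthogonal subcategory of `mod Λ`. -/
def MaxOrthogonal (n : ℕ) (C : Set (ModuleCat.{0} Λ)) : Prop :=
  (∀ M ∈ C, Module.Finite Λ M) ∧
  -- covariantly finite
  (∀ M : ModuleCat.{0} Λ, Module.Finite Λ M →
    ∃ C₀ ∈ C, ∃ f : M ⟶ C₀, ∀ C' ∈ C, ∀ g : M ⟶ C', ∃ h : C₀ ⟶ C', f ≫ h = g) ∧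
  -- contravariantly finite
  (∀ M : ModuleCat.{0} Λ, Module.Finite Λ M →
    ∃ C₀ ∈ C, ∃ f : C₀ ⟶ M, ∀ C' ∈ C, ∀ g : C' ⟶ M, ∃ h : C' ⟶ C₀, h ≫ f = g) ∧
  -- C = ⊥ₙC
  (∀ M : ModuleCat.{0} Λ, Module.Finite Λ M →
    (M ∈ C ↔ ∀ C' ∈ C, ∀ i, 1 ≤ i → i ≤ n → extZero M C' i)) ∧
  -- C = C⊥ₙ
  (∀ M : ModuleCat.{0} Λ, Module.Finite Λ M →
    (M ∈ C ↔ ∀ C' ∈ C, ∀ i, 1 ≤ i → i ≤ n → extZero C' M i))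

/-- `E` is a finitely generated injective cogenerator (the role of `D(Λ^op)`). -/
def IsInjCogen (E : ModuleCat.{0} Λ) : Prop :=
  Module.Finite Λ E ∧ Injective E ∧
    ∀ M : ModuleCat.{0} Λ, Module.Finite Λ M →
      ∃ (k : ℕ) (f : M ⟶ ModuleCat.of Λ (Fin k → E)), Function.Injective f


/-- `M` is an indecomposable module. -/
def Indec (M : ModuleCat.{0} Λ) : Prop :=
  Nontrivial M ∧ ∀ Y Z : ModuleCat.{0} Λ, Nonempty (M ≅ Y ⊞ Z) → Subsingleton Y ∨ Subsingleton Z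

/-- `X` belongs to `add M`: `X` is a direct summand of a finite direct sum of copies of `M`. -/
def memAdd (M X : ModuleCat.{0} Λ) : Prop :=
  ∃ (k : ℕ) (Z : ModuleCat.{0} Λ), Nonempty (ModuleCat.of Λ (Fin k → ↥M) ≅ X ⊞ Z)

/-- `M` has no nonzero projective direct summands. -/
def NoProjSummand (M : ModuleCat.{0} Λ) : Prop :=
  ∀ P Z : ModuleCat.{0} Λ, Nonempty (M ≅ P ⊞ Z) → Projective P → Subsingleton P

/-- `Λ` is an almost hereditary algebra: `gl.dim Λ ≤ 2` and every (f.g.) indecomposable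
module has projective dimension at most 1 or injective dimension at most 1. -/
def AlmostHereditary : Prop :=
  glDimLE Λ 2 ∧ ∀ M : ModuleCat.{0} Λ, Module.Finite Λ M → Indec Λ M →
    pdLE Λ M 1 ∨ idLE Λ M 1

/-- `X` has a finite resolution `0 → C_m → ⋯ → C_0 → X → 0` with all `C_i ∈ add T`. -/
def FinResByAdd (T X : ModuleCat.{0} Λ) : Prop :=
  ∃ (m : ℕ) (Cc : ℕ → ModuleCat.{0} Λ) (π : Cc 0 ⟶ X) (d : ∀ i : ℕ, Cc (i + 1) ⟶ Cc i),
    (∀ i ≤ m, memAdd Λ T (Cc i)) ∧ Function.Surjective π ∧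
    LinearMap.range (d 0).hom = LinearMap.ker π.hom ∧
    (∀ i, LinearMap.range (d (i + 1)).hom = LinearMap.ker (d i).hom) ∧
    (∀ i, m < i → Subsingleton (Cc i))

/-- `T` is a cotilting module: finite injective dimension, self-orthogonal, and the
injective cogenerator `D(Λ^op)` has a finite `add T`-resolution. -/
def Cotilting (T : ModuleCat.{0} Λ) : Prop :=
  Module.Finite Λ T ∧ (∃ n, idLE Λ T n) ∧ (∀ i, 1 ≤ i → extZero T T i) ∧
    ∃ E : ModuleCat.{0} Λ, IsInjCogen Λ E ∧ FinResByAdd Λ T E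

/-- `T` is a strong cotilting module: the modules of finite injective dimension are
exactly the ones with a finite `add T`-resolution. -/
def StrongCotilting (T : ModuleCat.{0} Λ) : Prop :=
  Cotilting Λ T ∧ ∀ X : ModuleCat.{0} Λ, Module.Finite Λ X →
    ((∃ m, idLE Λ X m) ↔ FinResByAdd Λ T X)

/-- The subcategory `^⊥Λ` of f.g. modules `X` with `Ext^i(X,Λ) = 0` for all `i ≥ 1`. -/
def perpLam : Set (ModuleCat.{0} Λ) :=
  {X | Module.Finite Λ X ∧ ∀ i, 1 ≤ i → extZero X (ModuleCat.of Λ Λ) i}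

end Paper

namespace Paper

section Auxiliary

variable {Λ : Type} [Ring Λ]

lemma isZero_iff_subsingleton (M : ModuleCat ℤ) : IsZero M ↔ Subsingleton M := by
  constructor
  · intro h
    have hid : (𝟙 M : M ⟶ M) = 0 := by rw [← IsZero.iff_id_eq_zero]; exact h
    refine ⟨fun a b => ?_⟩
    have ha : ∀ a : M, a = 0 := fun a => by
      have : (𝟙 M : M ⟶ M) a = (0 : M ⟶ M) a := by rw [hid]
      simpa using this
    rw [ha a, ha b]
  · intro h; exact ModuleCat.isZero_of_subsingleton M

lemma extZero_iff' {N S : ModuleCat.{0} Λ} (P : ProjectiveResolution N) (i : ℕ) :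
    extZero N S (i + 1) ↔
      ∀ f : P.complex.X (i + 1) ⟶ S, P.complex.d (i + 2) (i + 1) ≫ f = 0 →
        ∃ g : P.complex.X i ⟶ S, f = P.complex.d (i + 1) i ≫ g := by
  have e := P.isoExt (R := ℤ) (i+1) S
  set K := P.complex.linearYonedaObj ℤ S with hK
  have h1 : extZero N S (i+1) ↔ Subsingleton (K.homology (i+1)) := by
    unfold extZero
    constructor
    · intro h; exact Equiv.subsingleton (((forget _).mapIso e).toEquiv.symm)
    · intro h; exact Equiv.subsingleton (((forget _).mapIso e).toEquiv)
  rw [h1, ← isZero_iff_subsingleton, ← HomologicalComplex.exactAt_iff_isZero_homology,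
    HomologicalComplex.exactAt_iff' K i (i+1) (i+2) (by simp) (by simp),
    ShortComplex.moduleCat_exact_iff]
  constructor
  · intro h f hf
    obtain ⟨g, hg⟩ := h f hf
    exact ⟨g, hg.symm⟩
  · intro h f hf
    obtain ⟨g, hg⟩ := h f hf
    exact ⟨g, hg.symm⟩



/-- Data of an explicit projective resolution. -/
structure ResData (N : ModuleCat.{0} Λ) where
  P : ℕ → ModuleCat.{0} Λ
  π : P 0 ⟶ N
  d : ∀ i : ℕ, P (i + 1) ⟶ P i
  proj : ∀ i, Projective (P i)
  surj : Function.Surjective π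
  ex0 : LinearMap.range (d 0).hom = LinearMap.ker π.hom
  ex : ∀ i, LinearMap.range (d (i + 1)).hom = LinearMap.ker (d i).hom

namespace ResData

variable {N : ModuleCat.{0} Λ} (D : ResData N)

lemma dd (i : ℕ) : D.d (i + 1) ≫ D.d i = 0 := by
  apply ModuleCat.hom_ext; apply LinearMap.ext; intro x
  have : D.d (i+1) x ∈ LinearMap.range (D.d (i+1)).hom := ⟨x, rfl⟩
  rw [D.ex i] at this
  simpa using this

def complex : ChainComplex (ModuleCat.{0} Λ) ℕ :=
  ChainComplex.of D.P D.d D.dd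

lemma dπ : (D.complex.d 1 0) ≫ D.π = 0 := by
  have h : D.complex.d 1 0 = D.d 0 := ChainComplex.of_d D.P D.d 0
  rw [h]
  apply ModuleCat.hom_ext; apply LinearMap.ext; intro x
  have : D.d 0 x ∈ LinearMap.range (D.d 0).hom := ⟨x, rfl⟩
  rw [D.ex0] at this
  exact this

/-- The bundled projective resolution. -/
def toRes : ProjectiveResolution N where
  complex := D.complex
  projective n := D.proj n
  π := (ChainComplex.toSingle₀Equiv _ _).symm ⟨D.π, D.dπ⟩
  quasiIso := ⟨fun n => by
    cases n with
    | zero =>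
      rw [ChainComplex.quasiIsoAt₀_iff, ShortComplex.quasiIso_iff_of_zeros']
      · refine ⟨?_, ?_⟩
        · rw [ShortComplex.moduleCat_exact_iff]
          intro x₂ hx
          dsimp at x₂ hx ⊢
          change D.π x₂ = 0 at hx
          have h1 : D.complex.d 1 0 = D.d 0 := ChainComplex.of_d D.P D.d 0
          have hm : x₂ ∈ LinearMap.ker D.π.hom := hx
          rw [← D.ex0] at hm
          obtain ⟨y, hy⟩ := hm
          exact ⟨y, by change D.complex.d 1 0 y = x₂; rw [h1]; exact hy⟩
        · rw [ModuleCat.epi_iff_surjective]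
          intro y
          obtain ⟨x, hx⟩ := D.surj y
          refine ⟨x, ?_⟩
          dsimp
          show D.π x = y
          exact hx
      all_goals rfl
    | succ n =>
      rw [quasiIsoAt_iff_exactAt']
      · rw [HomologicalComplex.exactAt_iff' D.complex (n+2) (n+1) n (by simp [ChainComplex.prev]) (by simp [ChainComplex.next_nat_succ]),
          ShortComplex.moduleCat_exact_iff]
        intro x₂ hx
        have h1 : D.complex.d (n+1) n = D.d n := ChainComplex.of_d _ _ n
        have h2 : D.complex.d (n+2) (n+1) = D.d (n+1) := ChainComplex.of_d _ _ (n+1)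
        dsimp at x₂ hx ⊢
        change D.complex.d (n+1) n x₂ = 0 at hx
        rw [h1] at hx
        have hm : x₂ ∈ LinearMap.ker (D.d n).hom := hx
        rw [← D.ex n] at hm
        obtain ⟨y, hy⟩ := hm
        exact ⟨y, by change D.complex.d (n+2) (n+1) y = x₂; rw [h2]; exact hy⟩
      · apply ChainComplex.exactAt_succ_single_obj⟩

end ResData

lemma ResData.extZero_iff {N : ModuleCat.{0} Λ} (D : ResData N) (S : ModuleCat.{0} Λ) (i : ℕ) :
    extZero N S (i + 1) ↔
      ∀ f : D.P (i + 1) ⟶ S, D.d (i + 1) ≫ f = 0 →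
        ∃ g : D.P i ⟶ S, f = D.d i ≫ g := by
  rw [extZero_iff' D.toRes i]
  have h2 : D.toRes.complex.d (i+2) (i+1) = D.d (i+1) := ChainComplex.of_d _ _ (i+1)
  have h1 : D.toRes.complex.d (i+1) i = D.d i := ChainComplex.of_d _ _ i
  rw [h1, h2]
  exact Iff.rfl

lemma extZero_of_injective {S : ModuleCat.{0} Λ} (hS : Injective S) (N : ModuleCat.{0} Λ) (i : ℕ) :
    extZero N S (i + 1) := by
  haveI := hS
  obtain ⟨P⟩ := (inferInstance : HasProjectiveResolution N).out
  rw [extZero_iff' P i]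
  intro f hf
  have hex := P.exact_succ i
  rw [ShortComplex.moduleCat_exact_iff] at hex
  set d1 : P.complex.X (i+1) ⟶ P.complex.X i := P.complex.d (i+1) i with hd1
  have hker : LinearMap.ker d1.hom ≤ LinearMap.ker f.hom := by
    intro x hx
    obtain ⟨y, hy⟩ := hex x hx
    have h0 : f (P.complex.d (i+2) (i+1) y) = 0 := by
      have := congrArg (fun φ => φ y) hf
      simpa using this
    have : f x = 0 := by rw [← hy]; exact h0
    exact this
  set A : Submodule Λ (P.complex.X i) := LinearMap.range d1.hom with hA
  let e := LinearMap.quotKerEquivRange (d1.hom : P.complex.X (i+1) →ₗ[Λ] P.complex.X i)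
  let φ0 : (P.complex.X (i+1) ⧸ LinearMap.ker d1.hom) →ₗ[Λ] S := Submodule.liftQ _ f.hom hker
  let φ : ModuleCat.of Λ A ⟶ S := ModuleCat.ofHom (φ0.comp (e.symm : A →ₗ[Λ] _))
  let incl : ModuleCat.of Λ A ⟶ P.complex.X i := ModuleCat.ofHom A.subtype
  haveI : Mono incl := (ModuleCat.mono_iff_injective incl).2 (Submodule.injective_subtype A)
  refine ⟨Injective.factorThru φ incl, ?_⟩
  apply ModuleCat.hom_ext; apply LinearMap.ext; intro y
  have h1 : incl ≫ Injective.factorThru φ incl = φ := Injective.comp_factorThru φ incl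
  have hy : d1 y ∈ A := ⟨y, rfl⟩
  have h2 : (Injective.factorThru φ incl) (d1 y) = φ ⟨d1 y, hy⟩ := by
    exact congrArg (fun ψ => ψ (⟨d1 y, hy⟩ : A)) h1
  have h3 : e (Submodule.Quotient.mk y) = ⟨d1 y, hy⟩ := by
    apply Subtype.ext
    simp [e, LinearMap.quotKerEquivRange]
  have h4 : φ ⟨d1 y, hy⟩ = f y := by
    have : e.symm ⟨d1 y, hy⟩ = Submodule.Quotient.mk y := by
      rw [← h3, LinearEquiv.symm_apply_apply]
    show φ0 (e.symm ⟨d1 y, hy⟩) = f y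
    rw [this]
    simp [φ0]
  show f y = (Injective.factorThru φ incl) (d1 y)
  rw [h2, h4]

/-- A retract of an injective object is injective. -/
lemma injective_of_retract {S Q : ModuleCat.{0} Λ} (hQ : Injective Q) (s : S ⟶ Q) (r : Q ⟶ S)
    (hsr : s ≫ r = 𝟙 S) : Injective S := by
  haveI := hQ
  refine ⟨fun {X Y} g i hi => ?_⟩
  refine ⟨Injective.factorThru (g ≫ s) i ≫ r, ?_⟩
  rw [← Category.assoc, Injective.comp_factorThru, Category.assoc, hsr, Category.comp_id]

lemma projective_punit : Projective (ModuleCat.of Λ PUnit) := by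
  refine ⟨fun {E X} f e he => ?_⟩
  refine ⟨0, ?_⟩
  apply ModuleCat.hom_ext; apply LinearMap.ext; intro x
  have hx : x = 0 := Subsingleton.elim x 0
  subst hx
  simp

/-- The trivial resolution of a projective module. -/
def ResData.ofProjective (M : ModuleCat.{0} Λ) (hM : Projective M) : ResData M where
  P := fun k => match k with | 0 => M | (_+1) => ModuleCat.of Λ PUnit
  π := 𝟙 M
  d := fun _ => 0
  proj := fun i => match i with | 0 => hM | (_+1) => projective_punit
  surj := fun x => ⟨x, rfl⟩
  ex0 := by
    apply le_antisymm
    · rintro x ⟨y, rfl⟩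
      show (𝟙 M) ((0 : ModuleCat.of Λ PUnit ⟶ M) y) = 0
      rfl
    · intro x hx
      have hx0 : x = 0 := hx
      exact ⟨0, by rw [hx0]; rfl⟩
  ex := fun i => by
    apply le_antisymm
    · intro x _; trivial
    · intro x _
      exact ⟨0, (Subsingleton.elim _ _)⟩

/-- Shifting a resolution along a short exact sequence `0 → A → Q → B → 0` with `Q` projective. -/
def ResData.shift {A Q B : ModuleCat.{0} Λ} (D : ResData A) (a : A ⟶ Q) (p : Q ⟶ B)
    (hQ : Projective Q) (ha : Function.Injective a) (hp : Function.Surjective p)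
    (hker : LinearMap.ker p.hom = LinearMap.range a.hom) : ResData B where
  P := fun k => match k with | 0 => Q | (k+1) => D.P k
  π := p
  d := fun i => match i with | 0 => D.π ≫ a | (i+1) => D.d i
  proj := fun i => match i with | 0 => hQ | (i+1) => D.proj i
  surj := hp
  ex0 := by
    rw [hker]
    apply le_antisymm
    · rintro x ⟨y, rfl⟩
      exact ⟨D.π y, rfl⟩
    · rintro x ⟨z, rfl⟩
      obtain ⟨y, hy⟩ := D.surj z
      exact ⟨y, by show a (D.π y) = a z; rw [hy]⟩
  ex := fun i => match i with
    | 0 => by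
      show LinearMap.range (D.d 0).hom = LinearMap.ker (D.π ≫ a).hom
      rw [D.ex0]
      apply le_antisymm
      · intro x hx
        show a (D.π x) = 0
        have : D.π x = 0 := hx
        rw [this, map_zero]
      · intro x hx
        have hax : a (D.π x) = 0 := hx
        have : D.π x = 0 := by
          apply ha
          rw [hax, map_zero]
        exact this
    | (i+1) => D.ex i

end Auxiliary

/-- Proposition 2.6(2): over an `(n−1)`-Auslander algebra with `gl.dim Λ = n`, for a
projective simple module `S`, `Hom(I^0(Λ), S) ≠ 0` iff `S` is injective, and
`Hom(I^0(Λ), S) = 0` iff `id S = n`. -/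
theorem projective_simple_hom_characterization
    (R₀ : Type) [CommRing R₀] [IsArtinianRing R₀]
    (Λ : Type) [Ring Λ] [Algebra R₀ Λ] [Module.Finite R₀ Λ]
    (n : ℕ) (hn : 2 ≤ n)
    (res : MinInjRes Λ (ModuleCat.of Λ Λ))
    (hAus : ∀ i ≤ n - 1, Projective (res.I i))
    (hgl : glDimEq Λ n)
    (S : ModuleCat.{0} Λ) (hS : IsSimpleModule Λ S) (hproj : Projective S) :
    ((∃ f : res.I 0 ⟶ S, f ≠ 0) ↔ Injective S) ∧
    ((∀ f : res.I 0 ⟶ S, f = 0) ↔ idEq Λ S n) := by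
  haveI : Nontrivial S := IsSimpleModule.nontrivial Λ S
  obtain ⟨s₀, hs₀⟩ := exists_ne (0 : S)
  set u : ModuleCat.of Λ Λ ⟶ S := ModuleCat.ofHom (LinearMap.toSpanSingleton Λ S s₀) with hudef
  have hu : u ≠ 0 := by
    intro h
    apply hs₀
    have h1 : u (1 : Λ) = s₀ := by
      show (LinearMap.toSpanSingleton Λ S s₀) (1 : Λ) = s₀
      simp
    rw [← h1, h]
    rfl
  -- (A) forward
  have hAfwd : (∃ f : res.I 0 ⟶ S, f ≠ 0) → Injective S := by
    rintro ⟨f, hf⟩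
    have hne : LinearMap.range f.hom ≠ ⊥ := by
      intro h
      apply hf
      apply ModuleCat.hom_ext; apply LinearMap.ext; intro x
      have hx : f x ∈ LinearMap.range f.hom := ⟨x, rfl⟩
      rw [h] at hx
      simpa using hx
    have hrange : LinearMap.range f.hom = ⊤ :=
      (hS.eq_bot_or_eq_top (LinearMap.range f.hom)).resolve_left hne
    haveI : Epi f := (ModuleCat.epi_iff_surjective f).2 (LinearMap.range_eq_top.1 hrange)
    haveI := hproj
    exact injective_of_retract (res.injective 0) _ _ (Projective.factorThru_comp (𝟙 S) f)
  -- (A) backward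
  have hAbwd : Injective S → (∃ f : res.I 0 ⟶ S, f ≠ 0) := by
    intro hinj
    haveI := hinj
    haveI : Mono res.ι := (ModuleCat.mono_iff_injective _).2 res.mono_ι
    refine ⟨Injective.factorThru u res.ι, fun h => ?_⟩
    have hc := Injective.comp_factorThru u res.ι
    rw [h, Limits.comp_zero] at hc
    exact hu hc.symm
  -- key nonvanishing
  have hkey : (∀ f : res.I 0 ⟶ S, f = 0) → ∀ m, idLE Λ S m → n ≤ m := by
    intro hzero m hm
    by_contra hlt
    push_neg at hlt
    set Aj : ℕ → ModuleCat.{0} Λ := fun j => ModuleCat.of Λ (LinearMap.range (res.d j).hom) with hAj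
    have projΛ : Projective (ModuleCat.of Λ Λ) :=
      (IsProjective.iff_projective Λ).mp inferInstance
    have main : ∀ j, j < n → Nonempty (ResData (Aj j)) ∧ ¬ extZero (Aj j) S (j + 1) := by
      intro j
      induction j with
      | zero =>
        intro _
        set p0 : res.I 0 ⟶ Aj 0 := ModuleCat.ofHom (res.d 0).hom.rangeRestrict with hp0
        have hker0 : LinearMap.ker p0.hom = LinearMap.range res.ι.hom := by
          show LinearMap.ker (res.d 0).hom.rangeRestrict = _
          rw [LinearMap.ker_rangeRestrict, ← res.exact_ι]
        set D0 : ResData (Aj 0) :=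
          (ResData.ofProjective (ModuleCat.of Λ Λ) projΛ).shift res.ι p0
            (hAus 0 (by omega)) res.mono_ι (LinearMap.surjective_rangeRestrict _) hker0 with hD0
        refine ⟨⟨D0⟩, fun hext => ?_⟩
        obtain ⟨g, hg⟩ := (D0.extZero_iff S 0).1 hext u (by
          show (0 : ModuleCat.of Λ PUnit ⟶ ModuleCat.of Λ Λ) ≫ u = 0
          exact Limits.zero_comp)
        apply hu
        rw [hzero g] at hg; replace hg := hg.trans Limits.comp_zero
        exact hg
      | succ k ih =>
        intro hk
        obtain ⟨⟨D⟩, hD⟩ := ih (by omega)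
        set a : Aj k ⟶ res.I (k + 1) := ModuleCat.ofHom (LinearMap.range (res.d k).hom).subtype
          with ha
        set p : res.I (k + 1) ⟶ Aj (k + 1) := ModuleCat.ofHom (res.d (k + 1)).hom.rangeRestrict
          with hp
        have hker : LinearMap.ker p.hom = LinearMap.range a.hom := by
          show LinearMap.ker (res.d (k + 1)).hom.rangeRestrict = _
          rw [LinearMap.ker_rangeRestrict, ← res.exact_d k]
          exact (Submodule.range_subtype _).symm
        set D' : ResData (Aj (k + 1)) :=
          D.shift a p (hAus (k + 1) (by omega)) (Submodule.injective_subtype _)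
            (LinearMap.surjective_rangeRestrict _) hker with hD'
        refine ⟨⟨D'⟩, fun hext => ?_⟩
        apply hD
        rw [D.extZero_iff S k]
        exact (D'.extZero_iff S (k + 1)).1 hext
    have hfin := (main (n - 1) (by omega)).2
    apply hfin
    have := hm (Aj (n - 1)) ((n - 1) + 1) (by omega)
    exact this
  have hIn : idLE Λ S n := fun N i hi => hgl.1 N S i hi
  refine ⟨⟨hAfwd, hAbwd⟩, ⟨?_, ?_⟩⟩
  · intro hzero
    exact ⟨hIn, hkey hzero⟩
  · intro hid f
    by_contra hf
    have hinj := hAfwd ⟨f, hf⟩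
    have h0 : idLE Λ S 0 := by
      intro N i hi
      obtain ⟨k, rfl⟩ : ∃ k, i = k + 1 := ⟨i - 1, by omega⟩
      exact extZero_of_injective hinj N k
    have := hid.2 0 h0
    omega


end Paper
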